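/- For any integer p ≥ 1, let M = max_{x ∈ [0,1]} (x(1-x)^p + x^p(1-x)). Then ex_p(n, C_5) = M·n^{p+1} + o(n^{p+1}); that is, for every ε > 0 there exists N such that for all n ≥ N, |ex_p(n, C_5) - M·n^{p+1}| ≤ ε·n^{p+1}. -/

import Mathlib

/-- A graph is `C5`-free if it contains no cycle of length 5 as a subgraph. -/
def C5Free {V : Type*} (G : SimpleGraph V) : Prop :=
  ¬ ∃ v : Fin 5 → V, Function.Injective v ∧ ∀ i : Fin 5, G.Adj (v i) (v (i + 1))

/-- The sum of the `p`-th powers of the degrees of a finite graph. -/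
noncomputable def ep {V : Type*} [Fintype V] (G : SimpleGraph V) (p : ℕ) : ℕ :=
  letI : DecidableRel G.Adj := fun _ _ => Classical.dec _
  ∑ v, G.degree v ^ p

/-- `exP n p` is the maximum of `ep G p` over all `C5`-free graphs on `n` vertices. -/
noncomputable def exP (n p : ℕ) : ℕ :=
  sSup {m | ∃ G : SimpleGraph (Fin n), C5Free G ∧ ep G p = m}

open Finset SimpleGraph

section Aux

lemma ep_eq {V : Type*} [Fintype V] (G : SimpleGraph V) (inst : DecidableRel G.Adj) (p : ℕ) :
    ep G p = ∑ v, G.degree v ^ p := by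
  unfold ep
  congr!

lemma pow_incr (b t n p : ℕ) (h : b + t ≤ n) : (b + t) ^ p ≤ b ^ p + p * t * n ^ (p - 1) := by
  induction p with
  | zero => simp
  | succ p ih =>
    have hb : b ≤ n := le_trans (Nat.le_add_right _ _) h
    have h1 : (b + t) ^ (p + 1) = (b + t) ^ p * b + (b + t) ^ p * t := by ring
    have h2 : (b + t) ^ p * b ≤ (b ^ p + p * t * n ^ (p - 1)) * b := Nat.mul_le_mul_right _ ih
    have h3 : (b + t) ^ p * t ≤ n ^ p * t :=
      Nat.mul_le_mul_right _ (Nat.pow_le_pow_left h _)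
    have h4 : p * t * n ^ (p - 1) * b ≤ p * t * n ^ p := by
      rcases Nat.eq_zero_or_pos p with hp | hp
      · simp [hp]
      · calc p * t * n ^ (p - 1) * b ≤ p * t * n ^ (p - 1) * n := Nat.mul_le_mul_left _ hb
          _ = p * t * n ^ p := by
            rw [mul_assoc, ← pow_succ]
            congr 2
            omega
    calc (b + t) ^ (p + 1) = (b + t) ^ p * b + (b + t) ^ p * t := h1
      _ ≤ (b ^ p + p * t * n ^ (p - 1)) * b + n ^ p * t := Nat.add_le_add h2 h3
      _ = b ^ (p + 1) + p * t * n ^ (p - 1) * b + t * n ^ p := by ring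
      _ ≤ b ^ (p + 1) + p * t * n ^ p + t * n ^ p := by omega
      _ = b ^ (p + 1) + (p + 1) * t * n ^ ((p + 1) - 1) := by simp; ring

lemma c5_of_cycle {W : Type*} {G : SimpleGraph W} {a b c d e : W}
    (h1 : G.Adj a b) (h2 : G.Adj b c) (h3 : G.Adj c d) (h4 : G.Adj d e) (h5 : G.Adj e a)
    (nac : a ≠ c) (nad : a ≠ d) (nbd : b ≠ d) (nbe : b ≠ e) (nce : c ≠ e)
    (hf : C5Free G) : False := by
  have nab : a ≠ b := h1.ne
  have nbc : b ≠ c := h2.ne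
  have ncd : c ≠ d := h3.ne
  have nde : d ≠ e := h4.ne
  have nea : e ≠ a := h5.ne
  apply hf
  refine ⟨![a, b, c, d, e], ?_, ?_⟩
  · intro i j hij
    fin_cases i <;> fin_cases j <;> simp_all
  · intro i
    fin_cases i <;> simp [Fin.isValue] <;>
      first
        | exact h1 | exact h2 | exact h3 | exact h4 | exact h5

end Aux

section TriCount

variable {V : Type*} [Fintype V] [DecidableEq V] {G : SimpleGraph V} [DecidableRel G.Adj]

lemma tri_through_le (hf : C5Free G) (u : V) :
    ((G.cliqueFinset 3).filter (fun t => u ∈ t)).card ≤ 2 * Fintype.card V := by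
  classical
  set com : V → Finset V := fun x => univ.filter (fun y => G.Adj x y ∧ G.Adj u y) with hcom
  set T := (G.cliqueFinset 3).filter (fun t => u ∈ t) with hT
  have memT : ∀ t ∈ T, G.IsNClique 3 t ∧ u ∈ t := by
    intro t ht
    rw [hT, mem_filter, mem_cliqueFinset_iff] at ht
    exact ⟨ht.1, ht.2⟩
  have hinj : Set.InjOn (fun t : Finset V => t.erase u) ↑T := by
    intro t1 h1 t2 h2 h12
    simp only at h12
    rw [← Finset.insert_erase (memT t1 h1).2, h12, Finset.insert_erase (memT t2 h2).2]
  set Du := T.image (fun t => t.erase u) with hDu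
  have hcardDu : T.card = Du.card := (Finset.card_image_of_injOn hinj).symm
  have memDu : ∀ s ∈ Du, ∃ a b : V, a ≠ b ∧ s = {a, b} ∧ G.Adj u a ∧ G.Adj u b ∧ G.Adj a b := by
    intro s hs
    rw [hDu, mem_image] at hs
    obtain ⟨t, ht, rfl⟩ := hs
    obtain ⟨hcl, hu⟩ := memT t ht
    have hc2 : (t.erase u).card = 2 := by
      rw [Finset.card_erase_of_mem hu, hcl.2]
    obtain ⟨a, b, hab, hs⟩ := Finset.card_eq_two.1 hc2
    have ha : a ∈ t.erase u := by rw [hs]; simp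
    have hb : b ∈ t.erase u := by rw [hs]; simp
    have hau : a ≠ u := Finset.ne_of_mem_erase ha
    have hbu : b ≠ u := Finset.ne_of_mem_erase hb
    exact ⟨a, b, hab, hs,
      hcl.1 hu (Finset.mem_of_mem_erase ha) hau.symm,
      hcl.1 hu (Finset.mem_of_mem_erase hb) hbu.symm,
      hcl.1 (Finset.mem_of_mem_erase ha) (Finset.mem_of_mem_erase hb) hab⟩
  set Low := univ.filter (fun x => G.Adj u x ∧ (com x).card ≤ 2) with hLow
  have claim1 : ∀ s ∈ Du, ∃ x ∈ Low, x ∈ s := by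
    intro s hs
    obtain ⟨a, b, hab, rfl, hua, hub, hab'⟩ := memDu s hs
    by_contra hcon
    push_neg at hcon
    have hca : 3 ≤ (com a).card := by
      by_contra h
      exact hcon a (mem_filter.2 ⟨mem_univ _, hua, by omega⟩) (by simp)
    have hcb : 3 ≤ (com b).card := by
      by_contra h
      exact hcon b (mem_filter.2 ⟨mem_univ _, hub, by omega⟩) (by simp)
    have hx : ((com a).erase b).Nonempty := by
      rw [← Finset.card_pos]
      have h1 : (com a).card - 1 ≤ ((com a).erase b).card := Finset.pred_card_le_card_erase
      omega
    obtain ⟨x, hxe⟩ := hx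
    have hxb : x ≠ b := Finset.ne_of_mem_erase hxe
    have hxcom : x ∈ com a := Finset.mem_of_mem_erase hxe
    rw [hcom] at hxcom
    simp only [mem_filter] at hxcom
    obtain ⟨-, hax, hux⟩ := hxcom
    have hy : ((com b) \ {a, x}).Nonempty := by
      rw [← Finset.card_pos]
      have h1 : (com b).card ≤ ((com b) \ {a, x}).card + ({a, x} : Finset V).card :=
        Finset.card_le_card_sdiff_add_card
      have h2 : ({a, x} : Finset V).card ≤ 2 := Finset.card_le_two
      omega
    obtain ⟨y, hye⟩ := hy
    rw [Finset.mem_sdiff] at hye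
    obtain ⟨hycom, hyax⟩ := hye
    have hya : y ≠ a := fun h => hyax (by simp [h])
    have hyx : y ≠ x := fun h => hyax (by simp [h])
    rw [hcom] at hycom
    simp only [mem_filter] at hycom
    obtain ⟨-, hby, huy⟩ := hycom
    exact c5_of_cycle hux hax.symm hab' hby huy.symm
      hua.ne hub.ne hxb hyx.symm hya.symm hf
  have hsub : Du ⊆ Low.biUnion (fun x => Du.filter (fun s => x ∈ s)) := by
    intro s hs
    rw [Finset.mem_biUnion]
    obtain ⟨x, hx, hxs⟩ := claim1 s hs
    exact ⟨x, hx, mem_filter.2 ⟨hs, hxs⟩⟩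
  have hfibre : ∀ x ∈ Low, (Du.filter (fun s => x ∈ s)).card ≤ 2 := by
    intro x hx
    rw [hLow, mem_filter] at hx
    obtain ⟨-, hux, hcx⟩ := hx
    refine le_trans ?_ hcx
    have hinj2 : Set.InjOn (fun s : Finset V => s.erase x) ↑(Du.filter (fun s => x ∈ s)) := by
      intro s1 h1 s2 h2 h12
      simp only at h12
      rw [← Finset.insert_erase (mem_filter.1 h1).2, h12,
        Finset.insert_erase (mem_filter.1 h2).2]
    rw [← Finset.card_image_of_injOn hinj2]
    have himg : (Du.filter (fun s => x ∈ s)).image (fun s => s.erase x)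
        ⊆ (com x).image (fun y => {y}) := by
      intro w hw
      rw [Finset.mem_image] at hw
      obtain ⟨s, hsf, rfl⟩ := hw
      rw [mem_filter] at hsf
      obtain ⟨hs, hxs⟩ := hsf
      obtain ⟨a, b, hab, rfl, hua, hub, hab'⟩ := memDu s hs
      rw [Finset.mem_image]
      rcases Finset.mem_insert.1 hxs with h | h
      · subst h
        refine ⟨b, ?_, ?_⟩
        · rw [hcom]; exact mem_filter.2 ⟨mem_univ _, hab', hub⟩
        · exact (Finset.erase_insert (by simpa using hab)).symm
      · have h' : x = b := by simpa using h
        subst h'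
        refine ⟨a, ?_, ?_⟩
        · rw [hcom]; exact mem_filter.2 ⟨mem_univ _, hab'.symm, hua⟩
        · rw [Finset.pair_comm]
          exact (Finset.erase_insert (by simpa using hab.symm)).symm
    calc ((Du.filter (fun s => x ∈ s)).image (fun s => s.erase x)).card
        ≤ ((com x).image (fun y => ({y} : Finset V))).card := Finset.card_le_card himg
      _ ≤ (com x).card := Finset.card_image_le
  calc T.card = Du.card := hcardDu
    _ ≤ (Low.biUnion (fun x => Du.filter (fun s => x ∈ s))).card := Finset.card_le_card hsub
    _ ≤ ∑ x ∈ Low, (Du.filter (fun s => x ∈ s)).card := Finset.card_biUnion_le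
    _ ≤ ∑ _x ∈ Low, 2 := Finset.sum_le_sum hfibre
    _ = 2 * Low.card := by rw [Finset.sum_const, smul_eq_mul, mul_comm]
    _ ≤ 2 * Fintype.card V := by
        have := Finset.card_le_univ Low
        simpa [Finset.card_univ] using Nat.mul_le_mul_left 2 this

lemma tri_count (hf : C5Free G) :
    (G.cliqueFinset 3).card ≤ 2 * Fintype.card V * Fintype.card V := by
  classical
  have hsub : G.cliqueFinset 3 ⊆
      univ.biUnion (fun u => (G.cliqueFinset 3).filter (fun t => u ∈ t)) := by
    intro t ht
    have hne : t.Nonempty := by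
      rw [← Finset.card_pos, (mem_cliqueFinset_iff.1 ht).2]
      omega
    obtain ⟨u, hu⟩ := hne
    exact Finset.mem_biUnion.2 ⟨u, mem_univ _, mem_filter.2 ⟨ht, hu⟩⟩
  calc (G.cliqueFinset 3).card
      ≤ (univ.biUnion (fun u => (G.cliqueFinset 3).filter (fun t => u ∈ t))).card :=
        Finset.card_le_card hsub
    _ ≤ ∑ u, ((G.cliqueFinset 3).filter (fun t => u ∈ t)).card := Finset.card_biUnion_le
    _ ≤ ∑ _u : V, 2 * Fintype.card V := Finset.sum_le_sum (fun u _ => tri_through_le hf u)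
    _ = 2 * Fintype.card V * Fintype.card V := by
        rw [Finset.sum_const, smul_eq_mul, Finset.card_univ, mul_comm]

end TriCount

section TriFree

lemma trifree_bound {n p : ℕ} (G : SimpleGraph (Fin n)) [DecidableRel G.Adj]
    (h3 : G.CliqueFree 3) :
    ∑ v, G.degree v ^ p ≤
      G.maxDegree * (n - G.maxDegree) ^ p + (n - G.maxDegree) * G.maxDegree ^ p := by
  rcases Nat.eq_zero_or_pos n with hn | hn
  · subst hn; simp
  have : Nonempty (Fin n) := ⟨⟨0, hn⟩⟩
  obtain ⟨u, hu⟩ := G.exists_maximal_degree_vertex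
  set D := G.maxDegree with hD
  have hsplit := Finset.sum_filter_add_sum_filter_not Finset.univ
    (fun v => G.Adj u v) (fun v => G.degree v ^ p)
  have hfilt : Finset.univ.filter (fun v => G.Adj u v) = G.neighborFinset u := by
    ext w; simp [SimpleGraph.mem_neighborFinset]
  have hcard1 : (Finset.univ.filter (fun v => G.Adj u v)).card = D := by
    rw [hfilt, SimpleGraph.card_neighborFinset_eq_degree]; exact hu.symm
  have hdeg_nbr : ∀ v, G.Adj u v → G.degree v ≤ n - D := by
    intro v hv
    have hdisj : Disjoint (G.neighborFinset v) (G.neighborFinset u) := by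
      rw [Finset.disjoint_left]
      intro a hav hau
      rw [SimpleGraph.mem_neighborFinset] at hav hau
      exact h3 {u, v, a} (SimpleGraph.is3Clique_triple_iff.2 ⟨hv, hau, hav⟩)
    have hun := Finset.card_union_of_disjoint hdisj
    have hle : (G.neighborFinset v ∪ G.neighborFinset u).card ≤ n := by
      simpa using Finset.card_le_univ (G.neighborFinset v ∪ G.neighborFinset u)
    have h2 : G.degree v + D = (G.neighborFinset v ∪ G.neighborFinset u).card := by
      rw [hun, SimpleGraph.card_neighborFinset_eq_degree,
        SimpleGraph.card_neighborFinset_eq_degree, hu]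
    omega
  have h1 : ∑ v ∈ Finset.univ.filter (fun v => G.Adj u v), G.degree v ^ p
      ≤ D * (n - D) ^ p := by
    calc ∑ v ∈ Finset.univ.filter (fun v => G.Adj u v), G.degree v ^ p
        ≤ (Finset.univ.filter (fun v => G.Adj u v)).card • (n - D) ^ p :=
          Finset.sum_le_card_nsmul _ _ _ (by
            intro x hx
            simp only [Finset.mem_filter] at hx
            exact Nat.pow_le_pow_left (hdeg_nbr x hx.2) _)
      _ = D * (n - D) ^ p := by rw [hcard1, smul_eq_mul]
  have hcard2 : (Finset.univ.filter (fun v => ¬ G.Adj u v)).card = n - D := by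
    have := Finset.card_filter_add_card_filter_not (s := (Finset.univ : Finset (Fin n)))
      (p := fun v => G.Adj u v)
    simp only [Finset.card_univ, Fintype.card_fin] at this
    omega
  have h2 : ∑ v ∈ Finset.univ.filter (fun v => ¬ G.Adj u v), G.degree v ^ p
      ≤ (n - D) * D ^ p := by
    calc ∑ v ∈ Finset.univ.filter (fun v => ¬ G.Adj u v), G.degree v ^ p
        ≤ (Finset.univ.filter (fun v => ¬ G.Adj u v)).card • D ^ p :=
          Finset.sum_le_card_nsmul _ _ _ (fun x _ =>
            Nat.pow_le_pow_left (G.degree_le_maxDegree x) _)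
      _ = (n - D) * D ^ p := by rw [hcard2, smul_eq_mul]
  omega

end TriFree

section Bip

def bip (n a : ℕ) : SimpleGraph (Fin n) where
  Adj u v := ((u : ℕ) < a ∧ ¬ ((v : ℕ) < a)) ∨ ((v : ℕ) < a ∧ ¬ ((u : ℕ) < a))
  symm := by constructor; intro u v h; tauto
  loopless := by constructor; intro v h; tauto

instance {n a : ℕ} : DecidableRel (bip n a).Adj := fun u v =>
  inferInstanceAs (Decidable (_ ∨ _))

lemma bip_c5free (n a : ℕ) : C5Free (bip n a) := by
  rintro ⟨v, -, hadj⟩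
  have flip : ∀ i : Fin 5, ((v i : ℕ) < a ↔ ¬ ((v (i+1) : ℕ) < a)) := by
    intro i
    have := hadj i
    unfold bip at this
    simp only at this
    tauto
  have h0 := flip 0
  have h1 := flip 1
  have h2 := flip 2
  have h3 := flip 3
  have h4 := flip 4
  have e4 : (4 + 1 : Fin 5) = 0 := rfl
  rw [e4] at h4
  tauto

lemma card_filter_lt (n a : ℕ) (h : a ≤ n) :
    (Finset.univ.filter (fun w : Fin n => (w : ℕ) < a)).card = a := by
  have himg : Finset.univ.filter (fun w : Fin n => (w : ℕ) < a)
      = (Finset.univ : Finset (Fin a)).image (Fin.castLE h) := by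
    ext w
    simp only [Finset.mem_filter, Finset.mem_univ, true_and, Finset.mem_image]
    constructor
    · intro hw
      exact ⟨⟨(w : ℕ), hw⟩, by ext; simp⟩
    · rintro ⟨x, rfl⟩
      simpa using x.2
  rw [himg, Finset.card_image_of_injective _ (Fin.castLE_injective h)]
  simp

lemma bip_degree_lt {n a : ℕ} (h : a ≤ n) (v : Fin n) (hv : (v : ℕ) < a) :
    (bip n a).degree v = n - a := by
  rw [← SimpleGraph.card_neighborFinset_eq_degree]
  have heq : (bip n a).neighborFinset v
      = Finset.univ.filter (fun w : Fin n => ¬ ((w : ℕ) < a)) := by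
    ext w
    rw [SimpleGraph.mem_neighborFinset]
    unfold bip
    simp only [Finset.mem_filter, Finset.mem_univ, true_and]
    tauto
  rw [heq, Finset.filter_not, Finset.card_sdiff_of_subset (Finset.filter_subset _ _),
    card_filter_lt n a h]
  simp

lemma bip_degree_ge {n a : ℕ} (h : a ≤ n) (v : Fin n) (hv : ¬ ((v : ℕ) < a)) :
    (bip n a).degree v = a := by
  rw [← SimpleGraph.card_neighborFinset_eq_degree]
  have heq : (bip n a).neighborFinset v
      = Finset.univ.filter (fun w : Fin n => (w : ℕ) < a) := by
    ext w
    rw [SimpleGraph.mem_neighborFinset]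
    unfold bip
    simp only [Finset.mem_filter, Finset.mem_univ, true_and]
    constructor
    · intro hw; tauto
    · intro hw; right; exact ⟨hw, hv⟩
  rw [heq, card_filter_lt n a h]

lemma ep_bip {n a p : ℕ} (h : a ≤ n) :
    ep (bip n a) p = a * (n - a) ^ p + (n - a) * a ^ p := by
  rw [ep_eq (bip n a) inferInstance p]
  rw [← Finset.sum_filter_add_sum_filter_not Finset.univ (fun v : Fin n => (v : ℕ) < a)]
  have e1 : ∑ v ∈ Finset.univ.filter (fun v : Fin n => (v : ℕ) < a), (bip n a).degree v ^ p
      = a * (n - a) ^ p := by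
    rw [Finset.sum_congr rfl (fun v hv => by
      rw [bip_degree_lt h v (Finset.mem_filter.1 hv).2])]
    rw [Finset.sum_const, card_filter_lt n a h, smul_eq_mul]
  have e2 : ∑ v ∈ Finset.univ.filter (fun v : Fin n => ¬ ((v : ℕ) < a)), (bip n a).degree v ^ p
      = (n - a) * a ^ p := by
    rw [Finset.sum_congr rfl (fun v hv => by
      rw [bip_degree_ge h v (Finset.mem_filter.1 hv).2])]
    rw [Finset.sum_const, smul_eq_mul]
    congr 1
    rw [Finset.filter_not, Finset.card_sdiff_of_subset (Finset.filter_subset _ _), card_filter_lt n a h]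
    simp
  rw [e1, e2]

end Bip

section Cast

/-- Casting `D (n-D)^p + (n-D) D^p` to the normalized real form. -/
lemma cast_form {n D : ℕ} (p : ℕ) (hD : D ≤ n) (hn : 0 < n) :
    ((D * (n - D) ^ p + (n - D) * D ^ p : ℕ) : ℝ)
      = (n : ℝ) ^ (p + 1) *
        ((D / n : ℝ) * (1 - D / n) ^ p + (D / n : ℝ) ^ p * (1 - D / n)) := by
  have hnn : (0 : ℝ) < (n : ℝ) := by exact_mod_cast hn
  have hsub : ((n - D : ℕ) : ℝ) = (n : ℝ) - (D : ℝ) := by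
    rw [Nat.cast_sub hD]
  have h1 : (1 : ℝ) - (D : ℝ) / n = ((n : ℝ) - D) / n := by
    field_simp
  push_cast [hsub]
  rw [h1]
  rw [div_pow, div_pow]
  field_simp
  ring

lemma dterm_le {n D p : ℕ} {M : ℝ} (hp : 1 ≤ p) (hD : D ≤ n)
    (hM : IsGreatest ((fun x : ℝ => x * (1 - x) ^ p + x ^ p * (1 - x)) ''
      Set.Icc (0:ℝ) 1) M) :
    ((D * (n - D) ^ p + (n - D) * D ^ p : ℕ) : ℝ) ≤ M * (n : ℝ) ^ (p + 1) := by
  have hM0 : 0 ≤ M := by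
    have h00 := hM.2 ⟨0, by constructor <;> norm_num, rfl⟩
    simp only [zero_pow (by omega : p ≠ 0), zero_mul, mul_zero, add_zero] at h00
    linarith
  rcases Nat.eq_zero_or_pos n with hn | hn
  · subst hn
    have hD0 : D = 0 := by omega
    subst hD0
    simp
  rw [cast_form p hD hn]
  have hx : (D : ℝ) / n ∈ Set.Icc (0 : ℝ) 1 := by
    constructor
    · positivity
    · rw [div_le_one (by exact_mod_cast hn)]
      exact_mod_cast hD
  have := hM.2 ⟨(D : ℝ) / n, hx, rfl⟩
  calc (n : ℝ) ^ (p + 1) * ((D / n : ℝ) * (1 - D / n) ^ p + (D / n : ℝ) ^ p * (1 - D / n))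
      ≤ (n : ℝ) ^ (p + 1) * M := by
        apply mul_le_mul_of_nonneg_left this (by positivity)
    _ = M * (n : ℝ) ^ (p + 1) := mul_comm _ _

end Cast

section Upper

lemma upper_ep {n p : ℕ} (hp : 1 ≤ p) {M : ℝ}
    (hM : IsGreatest ((fun x : ℝ => x * (1 - x) ^ p + x ^ p * (1 - x)) ''
      Set.Icc (0:ℝ) 1) M)
    {ε' : ℝ} (hε'0 : 0 < ε')
    (hn : (2 * n * n : ℝ) < SimpleGraph.triangleRemovalBound ε' * (n : ℝ) ^ 3)
    (G : SimpleGraph (Fin n)) (hG : C5Free G) :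
    (ep G p : ℝ) ≤ M * (n : ℝ) ^ (p + 1) + 2 * p * ε' * (n : ℝ) ^ (p + 1) := by
  classical
  letI inst : DecidableRel G.Adj := fun _ _ => Classical.dec _
  -- few triangles
  have htri : ((G.cliqueFinset 3).card : ℝ)
      < SimpleGraph.triangleRemovalBound ε' * (Fintype.card (Fin n) : ℝ) ^ 3 := by
    have h1 : ((G.cliqueFinset 3).card : ℝ) ≤ 2 * n * n := by
      have := tri_count hG
      rw [Fintype.card_fin] at this
      exact_mod_cast this
    rw [Fintype.card_fin]
    linarith
  obtain ⟨G', hle, inst', hcut, h3⟩ := SimpleGraph.triangle_removal htri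
  -- degree comparisons
  have hdegle : ∀ v, G'.degree v ≤ G.degree v := by
    intro v
    apply Finset.card_le_card
    intro w hw
    rw [SimpleGraph.mem_neighborFinset] at hw ⊢
    exact hle hw
  have hdegn : ∀ v, G.degree v ≤ n := by
    intro v
    have := Finset.card_le_univ (G.neighborFinset v)
    simpa using this
  -- natural number estimate
  have hnat : ∑ v, G.degree v ^ p
      ≤ (∑ v, G'.degree v ^ p) + p * (∑ v, (G.degree v - G'.degree v)) * n ^ (p - 1) := by
    calc ∑ v, G.degree v ^ p
        ≤ ∑ v, (G'.degree v ^ p + p * (G.degree v - G'.degree v) * n ^ (p - 1)) := by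
          apply Finset.sum_le_sum
          intro v _
          have hbt : G'.degree v + (G.degree v - G'.degree v) = G.degree v :=
            Nat.add_sub_cancel' (hdegle v)
          have := pow_incr (G'.degree v) (G.degree v - G'.degree v) n p
            (by rw [hbt]; exact hdegn v)
          rw [hbt] at this
          exact this
      _ = (∑ v, G'.degree v ^ p) + ∑ v, p * (G.degree v - G'.degree v) * n ^ (p - 1) :=
          Finset.sum_add_distrib
      _ = (∑ v, G'.degree v ^ p) + p * (∑ v, (G.degree v - G'.degree v)) * n ^ (p - 1) := by
          rw [Finset.mul_sum, Finset.sum_mul]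
  -- edge count difference
  have hediff : ∑ v, (G.degree v - G'.degree v)
      = 2 * G.edgeFinset.card - 2 * G'.edgeFinset.card := by
    have h1 : (∑ v, (G.degree v - G'.degree v)) + ∑ v, G'.degree v = ∑ v, G.degree v := by
      rw [← Finset.sum_add_distrib]
      apply Finset.sum_congr rfl
      intro v _
      have := hdegle v
      omega
    have h2 := SimpleGraph.sum_degrees_eq_twice_card_edges G
    have h3' := SimpleGraph.sum_degrees_eq_twice_card_edges G'
    omega
  have hecard : G'.edgeFinset.card ≤ G.edgeFinset.card := by
    apply Finset.card_le_card
    rw [Finset.subset_iff]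
    intro e he
    rw [SimpleGraph.mem_edgeFinset] at he ⊢
    exact SimpleGraph.edgeSet_mono hle he
  -- real estimate
  have hcast : ((∑ v, (G.degree v - G'.degree v) : ℕ) : ℝ) ≤ 2 * (ε' * (n : ℝ) ^ 2) := by
    rw [hediff]
    have : ((2 * G.edgeFinset.card - 2 * G'.edgeFinset.card : ℕ) : ℝ)
        = 2 * ((G.edgeFinset.card : ℝ) - (G'.edgeFinset.card : ℝ)) := by
      rw [Nat.cast_sub (by omega)]
      push_cast
      ring
    rw [this]
    have hcut' : (G.edgeFinset.card : ℝ) - (G'.edgeFinset.card : ℝ) ≤ ε' * (n : ℝ) ^ 2 := by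
      have := hcut
      rw [Fintype.card_fin] at this
      push_cast at this
      linarith
    linarith
  have htf : ((∑ v, G'.degree v ^ p : ℕ) : ℝ) ≤ M * (n : ℝ) ^ (p + 1) := by
    have h1 := trifree_bound (p := p) G' h3
    have h2 : ((∑ v, G'.degree v ^ p : ℕ) : ℝ)
        ≤ ((G'.maxDegree * (n - G'.maxDegree) ^ p + (n - G'.maxDegree) * G'.maxDegree ^ p : ℕ) : ℝ) := by
      exact_mod_cast h1
    refine h2.trans (dterm_le hp ?_ hM)
    rcases Nat.eq_zero_or_pos n with hn0 | hn0
    · subst hn0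
      exact SimpleGraph.maxDegree_le_of_forall_degree_le G' 0 (fun v => v.elim0)
    · have : Nonempty (Fin n) := ⟨⟨0, hn0⟩⟩
      obtain ⟨u, hu⟩ := G'.exists_maximal_degree_vertex
      rw [hu]
      have := hdegn u
      have := hdegle u
      omega
  have hpow : (n : ℝ) ^ (p - 1) * (n : ℝ) ^ 2 = (n : ℝ) ^ (p + 1) := by
    rw [← pow_add]
    congr 1
    omega
  have hfin : (ep G p : ℝ) = ((∑ v, G.degree v ^ p : ℕ) : ℝ) := by
    rw [ep_eq G inst p]
  rw [hfin]
  have hnat' : ((∑ v, G.degree v ^ p : ℕ) : ℝ)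
      ≤ ((∑ v, G'.degree v ^ p : ℕ) : ℝ)
        + (p : ℝ) * ((∑ v, (G.degree v - G'.degree v) : ℕ) : ℝ) * (n : ℝ) ^ (p - 1) := by
    exact_mod_cast hnat
  have hp0 : (0 : ℝ) ≤ p := by positivity
  have hnp : (0 : ℝ) ≤ (n : ℝ) ^ (p - 1) := by positivity
  calc ((∑ v, G.degree v ^ p : ℕ) : ℝ)
      ≤ ((∑ v, G'.degree v ^ p : ℕ) : ℝ)
        + (p : ℝ) * ((∑ v, (G.degree v - G'.degree v) : ℕ) : ℝ) * (n : ℝ) ^ (p - 1) := hnat'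
    _ ≤ M * (n : ℝ) ^ (p + 1) + (p : ℝ) * (2 * (ε' * (n : ℝ) ^ 2)) * (n : ℝ) ^ (p - 1) := by
        have : (p : ℝ) * ((∑ v, (G.degree v - G'.degree v) : ℕ) : ℝ) * (n : ℝ) ^ (p - 1)
            ≤ (p : ℝ) * (2 * (ε' * (n : ℝ) ^ 2)) * (n : ℝ) ^ (p - 1) := by
          apply mul_le_mul_of_nonneg_right _ hnp
          apply mul_le_mul_of_nonneg_left hcast hp0
        linarith [htf]
    _ = M * (n : ℝ) ^ (p + 1) + 2 * p * ε' * ((n : ℝ) ^ (p - 1) * (n : ℝ) ^ 2) := by ring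
    _ = M * (n : ℝ) ^ (p + 1) + 2 * p * ε' * (n : ℝ) ^ (p + 1) := by rw [hpow]

end Upper

section Main

lemma bot_c5free (n : ℕ) : C5Free (⊥ : SimpleGraph (Fin n)) := by
  rintro ⟨v, -, h⟩
  simpa using h 0

lemma ep_le (n p : ℕ) (G : SimpleGraph (Fin n)) : ep G p ≤ n * n ^ p := by
  classical
  letI inst : DecidableRel G.Adj := fun _ _ => Classical.dec _
  rw [ep_eq G inst p]
  calc ∑ v, G.degree v ^ p ≤ ∑ _v : Fin n, n ^ p := by
        apply Finset.sum_le_sum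
        intro v _
        apply Nat.pow_le_pow_left
        simpa using Finset.card_le_univ (G.neighborFinset v)
    _ = n * n ^ p := by simp [Finset.sum_const, mul_comm]

theorem stmt1 (p : ℕ) (hp : 1 ≤ p) (M : ℝ)
    (hM : IsGreatest ((fun x : ℝ => x * (1 - x) ^ p + x ^ p * (1 - x)) ''
      Set.Icc (0:ℝ) 1) M) :
    ∀ ε : ℝ, 0 < ε → ∃ N : ℕ, ∀ n : ℕ, N ≤ n →
      |(exP n p : ℝ) - M * (n : ℝ) ^ (p + 1)| ≤ ε * (n : ℝ) ^ (p + 1) := by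
  intro ε hε
  classical
  have hp1 : (1 : ℝ) ≤ (p : ℝ) := by exact_mod_cast hp
  obtain ⟨x₀, hx₀, hfx₀⟩ := hM.1
  have hcf : Continuous (fun x : ℝ => x * (1 - x) ^ p + x ^ p * (1 - x)) := by
    exact (continuous_id.mul ((continuous_const.sub continuous_id).pow p)).add
      ((continuous_id.pow p).mul (continuous_const.sub continuous_id))
  have hca : ContinuousAt (fun x : ℝ => x * (1 - x) ^ p + x ^ p * (1 - x)) x₀ :=
    hcf.continuousAt
  obtain ⟨δ, hδ, hball⟩ := Metric.continuousAt_iff.1 hca (ε / 2) (by positivity)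
  set ε' : ℝ := min (ε / (4 * (p : ℝ))) 1 with hε'def
  have hε'0 : 0 < ε' := lt_min (by positivity) one_pos
  have hε'1 : ε' ≤ 1 := min_le_right _ _
  have htrb : 0 < SimpleGraph.triangleRemovalBound ε' :=
    SimpleGraph.triangleRemovalBound_pos hε'0
  refine ⟨max (max (⌈2 / SimpleGraph.triangleRemovalBound ε'⌉₊ + 1) (⌈1 / δ⌉₊ + 1)) 1, ?_⟩
  intro n hn
  have hn1 : 1 ≤ n := le_trans (le_max_right _ _) hn
  have hnR : (1 : ℝ) ≤ (n : ℝ) := by exact_mod_cast hn1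
  have hnR0 : (0 : ℝ) < (n : ℝ) := by linarith
  have hB0 : (0 : ℝ) ≤ (n : ℝ) ^ (p + 1) := by positivity
  -- removal-lemma size condition
  have hrm : (2 * n * n : ℝ) < SimpleGraph.triangleRemovalBound ε' * (n : ℝ) ^ 3 := by
    have h2 : (⌈2 / SimpleGraph.triangleRemovalBound ε'⌉₊ + 1 : ℕ) ≤ n :=
      le_trans (le_trans (le_max_left _ _) (le_max_left _ _)) hn
    have h3 : (2 / SimpleGraph.triangleRemovalBound ε' : ℝ) < n := by
      calc (2 / SimpleGraph.triangleRemovalBound ε' : ℝ)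
          ≤ (⌈2 / SimpleGraph.triangleRemovalBound ε'⌉₊ : ℝ) := Nat.le_ceil _
        _ < (⌈2 / SimpleGraph.triangleRemovalBound ε'⌉₊ : ℝ) + 1 := by linarith
        _ ≤ (n : ℝ) := by exact_mod_cast h2
    have h4 : 2 < SimpleGraph.triangleRemovalBound ε' * n := by
      rw [div_lt_iff₀ htrb] at h3
      linarith
    have h5 : (0 : ℝ) < (n : ℝ) * (n : ℝ) := by positivity
    calc (2 * n * n : ℝ) = 2 * ((n : ℝ) * n) := by ring
      _ < (SimpleGraph.triangleRemovalBound ε' * n) * ((n : ℝ) * n) := by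
          exact mul_lt_mul_of_pos_right h4 h5
      _ = SimpleGraph.triangleRemovalBound ε' * (n : ℝ) ^ 3 := by ring
  -- the set of values
  have hSne : ({m | ∃ G : SimpleGraph (Fin n), C5Free G ∧ ep G p = m}).Nonempty :=
    ⟨ep (⊥ : SimpleGraph (Fin n)) p, ⊥, bot_c5free n, rfl⟩
  have hSbdd : BddAbove {m | ∃ G : SimpleGraph (Fin n), C5Free G ∧ ep G p = m} := by
    refine ⟨n * n ^ p, ?_⟩
    rintro m ⟨G, -, rfl⟩
    exact ep_le n p G
  have hmem : exP n p ∈ {m | ∃ G : SimpleGraph (Fin n), C5Free G ∧ ep G p = m} :=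
    Nat.sSup_mem hSne hSbdd
  obtain ⟨G₀, hG₀, hepG₀⟩ := hmem
  -- upper bound
  have hup : (exP n p : ℝ) ≤ M * (n : ℝ) ^ (p + 1) + (ε / 2) * (n : ℝ) ^ (p + 1) := by
    rw [← hepG₀]
    refine (upper_ep hp hM hε'0 hrm G₀ hG₀).trans ?_
    have hkey : 2 * (p : ℝ) * ε' ≤ ε / 2 := by
      have h1 : ε' ≤ ε / (4 * (p : ℝ)) := min_le_left _ _
      have hp0 : (0 : ℝ) < (p : ℝ) := by linarith
      have h2 : 2 * (p : ℝ) * ε' ≤ 2 * (p : ℝ) * (ε / (4 * (p : ℝ))) := by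
        apply mul_le_mul_of_nonneg_left h1 (by positivity)
      have h3 : 2 * (p : ℝ) * (ε / (4 * (p : ℝ))) = ε / 2 := by
        field_simp
        ring
      linarith
    have := mul_le_mul_of_nonneg_right hkey hB0
    linarith
  -- lower bound
  set a : ℕ := ⌊x₀ * n⌋₊ with hadef
  have hx₀n : x₀ * n ≤ (n : ℝ) := by
    nlinarith [hx₀.1, hx₀.2]
  have han : a ≤ n := by
    have := Nat.floor_le_floor hx₀n
    rwa [Nat.floor_natCast] at this
  have hfa : |((a : ℝ) / n) - x₀| < δ := by
    have h1 : (a : ℝ) ≤ x₀ * n := Nat.floor_le (mul_nonneg hx₀.1 (by positivity))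
    have h2 : x₀ * n < (a : ℝ) + 1 := Nat.lt_floor_add_one _
    have hdn : 1 / δ < (n : ℝ) := by
      have h5 : (⌈1 / δ⌉₊ + 1 : ℕ) ≤ n :=
        le_trans (le_trans (le_max_right _ _) (le_max_left _ _)) hn
      calc (1 / δ : ℝ) ≤ (⌈1 / δ⌉₊ : ℝ) := Nat.le_ceil _
        _ < (⌈1 / δ⌉₊ : ℝ) + 1 := by linarith
        _ ≤ (n : ℝ) := by exact_mod_cast h5
    have hinv : 1 / (n : ℝ) < δ := by
      rw [div_lt_iff₀ hnR0]
      rw [div_lt_iff₀ hδ] at hdn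
      linarith
    have e1 : (a : ℝ) / n ≤ x₀ := by
      rw [div_le_iff₀ hnR0]
      linarith
    have e2 : x₀ < ((a : ℝ) + 1) / n := by
      rw [lt_div_iff₀ hnR0]
      linarith
    have e3 : ((a : ℝ) + 1) / n = (a : ℝ) / n + 1 / n := by ring
    rw [abs_lt]
    constructor
    · linarith [e2, e3, hinv]
    · linarith
  have hflow : M - ε / 2
      < ((a : ℝ) / n) * (1 - (a : ℝ) / n) ^ p + ((a : ℝ) / n) ^ p * (1 - (a : ℝ) / n) := by
    have hb := hball (show dist ((a : ℝ) / n) x₀ < δ by rw [Real.dist_eq]; exact hfa)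
    rw [Real.dist_eq] at hb
    have hM' : x₀ * (1 - x₀) ^ p + x₀ ^ p * (1 - x₀) = M := hfx₀
    rw [hM'] at hb
    have := abs_lt.1 hb
    linarith [this.1]
  have hlow : (M - ε / 2) * (n : ℝ) ^ (p + 1) ≤ (exP n p : ℝ) := by
    have hmem2 : ep (bip n a) p ∈ {m | ∃ G : SimpleGraph (Fin n), C5Free G ∧ ep G p = m} :=
      ⟨bip n a, bip_c5free n a, rfl⟩
    have hle2 : ep (bip n a) p ≤ exP n p := le_csSup hSbdd hmem2
    have heq : ((ep (bip n a) p : ℕ) : ℝ)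
        = (n : ℝ) ^ (p + 1) *
          (((a : ℝ) / n) * (1 - (a : ℝ) / n) ^ p + ((a : ℝ) / n) ^ p * (1 - (a : ℝ) / n)) := by
      rw [ep_bip han]
      exact cast_form p han hn1
    calc (M - ε / 2) * (n : ℝ) ^ (p + 1)
        ≤ (((a : ℝ) / n) * (1 - (a : ℝ) / n) ^ p + ((a : ℝ) / n) ^ p * (1 - (a : ℝ) / n))
            * (n : ℝ) ^ (p + 1) := by
          apply mul_le_mul_of_nonneg_right _ hB0
          exact le_of_lt hflow
      _ = ((ep (bip n a) p : ℕ) : ℝ) := by rw [heq]; ring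
      _ ≤ (exP n p : ℝ) := by exact_mod_cast hle2
  have hhalf : (ε / 2) * (n : ℝ) ^ (p + 1) ≤ ε * (n : ℝ) ^ (p + 1) := by
    apply mul_le_mul_of_nonneg_right _ hB0
    linarith
  rw [abs_le]
  constructor
  · linarith
  · linarith

end Main
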